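/- arXiv:2403.07148 — 4 statements merged into one kernel-verified Lean document; each statement's English description precedes it below -/
import Mathlib

section
/- Suppose each operator F_i : R^d → R^d is L_i-Lipschitz, F = (1/n)Σ_{i=1}^n F_i, and z_* satisfies F(z_*) = 0. Then for all z ∈ R^d: (1/n)Σ_{i=1}^n ‖F_i(z) - F(z)‖² ≤ A‖z - z_*‖² + 2σ_*², where A = (2/n)Σ_{i=1}^n L_i² and σ_*² = (1/n)Σ_{i=1}^n ‖F_i(z_*)‖². -/
theorem variance_bound_of_lipschitz {E : Type*} [NormedAddCommGroup E] [InnerProductSpace ℝ E]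
    (n : ℕ) (hn : 0 < n) (F : Fin n → E → E) (L : Fin n → ℝ)
    (hLip : ∀ i, ∀ z₁ z₂, ‖F i z₁ - F i z₂‖ ≤ L i * ‖z₁ - z₂‖)
    (Favg : E → E) (hF : ∀ z, Favg z = (n : ℝ)⁻¹ • ∑ i, F i z)
    (zstar : E) (hz : Favg zstar = 0) (z : E) :
    (n : ℝ)⁻¹ * ∑ i, ‖F i z - Favg z‖ ^ 2 ≤
      ((2 / (n : ℝ)) * ∑ i, L i ^ 2) * ‖z - zstar‖ ^ 2 +
        2 * ((n : ℝ)⁻¹ * ∑ i, ‖F i zstar‖ ^ 2) := by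
  have hn' : (n : ℝ) ≠ 0 := Nat.cast_ne_zero.mpr hn.ne'
  have hsum : ∑ i, F i z = (n : ℝ) • Favg z := by
    rw [hF, smul_smul, mul_inv_cancel₀ hn', one_smul]
  -- Step 1: variance ≤ second moment
  have h1 : ∑ i, ‖F i z - Favg z‖ ^ 2 ≤ ∑ i, ‖F i z‖ ^ 2 := by
    have expand : ∑ i, ‖F i z - Favg z‖ ^ 2
        = (∑ i, ‖F i z‖ ^ 2) - (n : ℝ) * ‖Favg z‖ ^ 2 := by
      have hns : ∀ i : Fin n, ‖F i z - Favg z‖ ^ 2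
          = ‖F i z‖ ^ 2 - 2 * inner ℝ (F i z) (Favg z) + ‖Favg z‖ ^ 2 := by
        intro i
        simpa using norm_sub_sq_real (F i z) (Favg z)
      simp_rw [hns]
      rw [Finset.sum_add_distrib, Finset.sum_sub_distrib, ← Finset.mul_sum,
        ← sum_inner, hsum, real_inner_smul_left, real_inner_self_eq_norm_sq,
        Finset.sum_const, Finset.card_univ, Fintype.card_fin, nsmul_eq_mul]
      ring
    have hnn : 0 ≤ (n : ℝ) * ‖Favg z‖ ^ 2 := by positivity
    linarith [expand]
  -- Step 2: termwise bound on ‖F i z‖²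
  have h2 : ∑ i, ‖F i z‖ ^ 2 ≤
      ∑ i, (2 * (L i ^ 2 * ‖z - zstar‖ ^ 2) + 2 * ‖F i zstar‖ ^ 2) := by
    apply Finset.sum_le_sum
    intro i _
    have htri : ‖F i z‖ ≤ L i * ‖z - zstar‖ + ‖F i zstar‖ := by
      calc ‖F i z‖ ≤ ‖F i z - F i zstar‖ + ‖F i zstar‖ := by
            simpa using norm_add_le (F i z - F i zstar) (F i zstar)
        _ ≤ L i * ‖z - zstar‖ + ‖F i zstar‖ := by
            linarith [hLip i z zstar]
      
    have ha : (0:ℝ) ≤ L i * ‖z - zstar‖ :=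
      le_trans (norm_nonneg _) (hLip i z zstar)
    have hb : (0:ℝ) ≤ ‖F i zstar‖ := norm_nonneg _
    have hsq : ‖F i z‖ ^ 2 ≤ (L i * ‖z - zstar‖ + ‖F i zstar‖) ^ 2 :=
      pow_le_pow_left₀ (norm_nonneg _) htri 2
    nlinarith [sq_nonneg (L i * ‖z - zstar‖ - ‖F i zstar‖)]
  have h3 : ∑ i, ‖F i z - Favg z‖ ^ 2 ≤
      ∑ i, (2 * (L i ^ 2 * ‖z - zstar‖ ^ 2) + 2 * ‖F i zstar‖ ^ 2) := h1.trans h2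
  have hinv : (0:ℝ) ≤ (n : ℝ)⁻¹ := by positivity
  calc (n : ℝ)⁻¹ * ∑ i, ‖F i z - Favg z‖ ^ 2
      ≤ (n : ℝ)⁻¹ * ∑ i, (2 * (L i ^ 2 * ‖z - zstar‖ ^ 2) + 2 * ‖F i zstar‖ ^ 2) :=
        mul_le_mul_of_nonneg_left h3 hinv
    _ = ((2 / (n : ℝ)) * ∑ i, L i ^ 2) * ‖z - zstar‖ ^ 2 +
        2 * ((n : ℝ)⁻¹ * ∑ i, ‖F i zstar‖ ^ 2) := by
        simp only [Finset.sum_add_distrib, mul_add, Finset.mul_sum, Finset.sum_mul]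
        congr 1
        all_goals exact Finset.sum_congr rfl (fun i _ => by field_simp; try ring)
end

section
/- Suppose each F_i : R^d → R^d is L_i-Lipschitz, F = (1/n)Σ_{i=1}^n F_i, and z_* satisfies F(z_*) = 0. Then for any fixed 1 ≤ d' ≤ n and z ∈ R^d, sampling d' indices without replacement via a uniformly random permutation π of {1,...,n}: d'² · E_π[‖(1/d')Σ_{j=0}^{d'-1} F_{π(j)}(z) - F(z)‖²] ≤ (d'(n - d')/(n-1)) · (A‖z - z_*‖² + 2σ_*²), where A = (2/n)Σ_{i=1}^n L_i² and σ_*² = (1/n)Σ_{i=1}^n ‖F_i(z_*)‖². -/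
open Finset Equiv RealInnerProductSpace

lemma perm_sum_single {n : ℕ} (g : Fin n → ℝ) (j : Fin n) :
    (n : ℝ) * ∑ π : Equiv.Perm (Fin n), g (π j) =
      (Fintype.card (Equiv.Perm (Fin n)) : ℝ) * ∑ i, g i := by
  have key : ∀ j' : Fin n, ∑ π : Equiv.Perm (Fin n), g (π j') =
      ∑ π : Equiv.Perm (Fin n), g (π j) := by
    intro j'
    refine (Fintype.sum_equiv (Equiv.mulRight (Equiv.swap j j'))
      (fun τ => g (τ j)) (fun π => g (π j')) ?_).symm
    intro τ
    simp [Equiv.Perm.mul_apply, Equiv.swap_apply_right]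
  have h1 : ∑ j' : Fin n, ∑ π : Equiv.Perm (Fin n), g (π j') =
      (n : ℝ) * ∑ π : Equiv.Perm (Fin n), g (π j) := by
    rw [Finset.sum_congr rfl (fun j' _ => key j')]
    simp [mul_comm]
  have h2 : ∑ j' : Fin n, ∑ π : Equiv.Perm (Fin n), g (π j') =
      (Fintype.card (Equiv.Perm (Fin n)) : ℝ) * ∑ i, g i := by
    rw [Finset.sum_comm]
    rw [Finset.sum_congr rfl (fun π _ => Equiv.sum_comp π g)]
    simp [mul_comm]
  linarith [h1, h2]

lemma exists_perm_two {n : ℕ} {j k j' k' : Fin n} (hjk : j ≠ k) (h' : j' ≠ k') :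
    ∃ σ : Equiv.Perm (Fin n), σ j' = j ∧ σ k' = k := by
  refine ⟨Equiv.swap ((Equiv.swap j' j) k') k * Equiv.swap j' j, ?_, ?_⟩
  · rw [Equiv.Perm.mul_apply, Equiv.swap_apply_left]
    apply Equiv.swap_apply_of_ne_of_ne _ hjk
    intro h
    apply h'
    have := (Equiv.swap j' j).injective (a₁ := j') (a₂ := k')
    apply this
    rw [Equiv.swap_apply_left, ← h]
  · rw [Equiv.Perm.mul_apply, Equiv.swap_apply_left]
lemma perm_sum_pair {n : ℕ} (f : Fin n → Fin n → ℝ) {j k : Fin n} (hjk : j ≠ k) :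
    (n : ℝ) * ((n : ℝ) - 1) * ∑ π : Equiv.Perm (Fin n), f (π j) (π k) =
      (Fintype.card (Equiv.Perm (Fin n)) : ℝ) *
        ((∑ i, ∑ l, f i l) - ∑ i, f i i) := by
  have hn1 : 1 ≤ n := j.pos
  have key : ∀ j' k' : Fin n, j' ≠ k' →
      ∑ π : Equiv.Perm (Fin n), f (π j') (π k') =
        ∑ π : Equiv.Perm (Fin n), f (π j) (π k) := by
    intro j' k' h'
    obtain ⟨σ, hσj, hσk⟩ := exists_perm_two hjk h'
    refine (Fintype.sum_equiv (Equiv.mulRight σ)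
      (fun τ => f (τ j) (τ k)) (fun π => f (π j') (π k')) ?_).symm
    intro τ
    simp [Equiv.Perm.mul_apply, hσj, hσk]
  have h1 : ∑ j' : Fin n, ∑ k' ∈ Finset.univ.erase j',
        ∑ π : Equiv.Perm (Fin n), f (π j') (π k') =
      (n : ℝ) * ((n : ℝ) - 1) * ∑ π : Equiv.Perm (Fin n), f (π j) (π k) := by
    have : ∀ j' : Fin n, ∑ k' ∈ Finset.univ.erase j',
        ∑ π : Equiv.Perm (Fin n), f (π j') (π k') =
        ((n : ℝ) - 1) * ∑ π : Equiv.Perm (Fin n), f (π j) (π k) := by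
      intro j'
      rw [Finset.sum_congr rfl (fun k' hk' => key j' k' (Finset.ne_of_mem_erase hk').symm)]
      rw [Finset.sum_const, Finset.card_erase_of_mem (Finset.mem_univ _)]
      simp [nsmul_eq_mul, Nat.cast_sub hn1]
    rw [Finset.sum_congr rfl (fun j' _ => this j')]
    simp [Finset.sum_const, nsmul_eq_mul]
    ring
  have h2 : ∑ j' : Fin n, ∑ k' ∈ Finset.univ.erase j',
        ∑ π : Equiv.Perm (Fin n), f (π j') (π k') =
      (Fintype.card (Equiv.Perm (Fin n)) : ℝ) * ((∑ i, ∑ l, f i l) - ∑ i, f i i) := by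
    have e1 : ∀ j' : Fin n, ∑ k' ∈ Finset.univ.erase j',
        ∑ π : Equiv.Perm (Fin n), f (π j') (π k') =
        (∑ k' : Fin n, ∑ π : Equiv.Perm (Fin n), f (π j') (π k'))
          - ∑ π : Equiv.Perm (Fin n), f (π j') (π j') := fun j' =>
      Finset.sum_erase_eq_sub (Finset.mem_univ j')
    rw [Finset.sum_congr rfl (fun j' _ => e1 j'), Finset.sum_sub_distrib]
    have e2 : ∑ j' : Fin n, ∑ k' : Fin n, ∑ π : Equiv.Perm (Fin n), f (π j') (π k') =
        ∑ π : Equiv.Perm (Fin n), ∑ i, ∑ l, f i l := by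
      have swap1 : ∑ j' : Fin n, ∑ k' : Fin n, ∑ π : Equiv.Perm (Fin n), f (π j') (π k') =
          ∑ π : Equiv.Perm (Fin n), ∑ j' : Fin n, ∑ k' : Fin n, f (π j') (π k') := by
        have inner : ∀ j' : Fin n, ∑ k' : Fin n, ∑ π : Equiv.Perm (Fin n), f (π j') (π k') =
            ∑ π : Equiv.Perm (Fin n), ∑ k' : Fin n, f (π j') (π k') := fun j' =>
          Finset.sum_comm
        rw [Finset.sum_congr rfl (fun j' _ => inner j')]
        exact Finset.sum_comm
      rw [swap1]
      refine Finset.sum_congr rfl (fun π _ => ?_)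
      rw [Finset.sum_comm]
      calc ∑ k' : Fin n, ∑ j' : Fin n, f (π j') (π k')
          = ∑ k' : Fin n, ∑ i, f i (π k') :=
            Finset.sum_congr rfl (fun k' _ => Equiv.sum_comp π (fun i => f i (π k')))
        _ = ∑ i, ∑ l, f i l := by
            rw [Finset.sum_comm]
            exact Finset.sum_congr rfl (fun i _ => Equiv.sum_comp π (f i))
    have e3 : ∑ j' : Fin n, ∑ π : Equiv.Perm (Fin n), f (π j') (π j') =
        ∑ π : Equiv.Perm (Fin n), ∑ i, f i i := by
      rw [Finset.sum_comm]
      exact Finset.sum_congr rfl (fun π _ => Equiv.sum_comp π (fun i => f i i))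
    rw [e2, e3]
    simp only [Finset.sum_const, Finset.card_univ, nsmul_eq_mul]
    simp [← Finset.mul_sum, mul_sub]
  linarith [h1, h2]

section helpers
variable {E : Type*} [NormedAddCommGroup E] [InnerProductSpace ℝ E]

-- variance bound: sum of squared deviations from mean ≤ sum of squared norms
lemma variance_le {n : ℕ} (hn : (n : ℝ) ≠ 0) (x : Fin n → E) (m : E)
    (hm : ∑ i, x i = (n : ℝ) • m) :
    ∑ i, ‖x i - m‖ ^ 2 ≤ ∑ i, ‖x i‖ ^ 2 := by
  have expand : ∀ i, ‖x i - m‖ ^ 2 = ‖x i‖ ^ 2 - 2 * ⟪x i, m⟫ + ‖m‖ ^ 2 := by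
    intro i; rw [norm_sub_sq_real]
  rw [Finset.sum_congr rfl (fun i _ => expand i)]
  have hsum : ∑ i, ⟪x i, m⟫ = (n : ℝ) * ‖m‖ ^ 2 := by
    rw [← sum_inner, hm, real_inner_smul_left, real_inner_self_eq_norm_sq]
  have hnn : 0 ≤ (n : ℝ) * ‖m‖ ^ 2 := by positivity
  simp only [Finset.sum_add_distrib, Finset.sum_sub_distrib,
    Finset.sum_const, Finset.card_univ, Fintype.card_fin, nsmul_eq_mul]
  rw [← Finset.mul_sum, hsum]
  nlinarith [hnn]

lemma norm_sq_expand {d : ℕ} (v : Fin d → E) :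
    ‖∑ j, v j‖ ^ 2 = ∑ j, ∑ k, ⟪v j, v k⟫ := by
  rw [← real_inner_self_eq_norm_sq, sum_inner]
  exact Finset.sum_congr rfl fun j _ => inner_sum _ _ _

end helpers

theorem sample_average_deviation_bound {E : Type*} [NormedAddCommGroup E] [InnerProductSpace ℝ E]
    (n : ℕ) (hn : 2 ≤ n) (F : Fin n → E → E) (L : Fin n → ℝ)
    (hLip : ∀ i, ∀ z₁ z₂, ‖F i z₁ - F i z₂‖ ≤ L i * ‖z₁ - z₂‖)
    (Favg : E → E) (hF : ∀ z, Favg z = (n : ℝ)⁻¹ • ∑ i, F i z)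
    (zstar : E) (hz : Favg zstar = 0)
    (d' : ℕ) (hd'1 : 1 ≤ d') (hd'n : d' ≤ n) (z : E) :
    (d' : ℝ) ^ 2 *
        ((Fintype.card (Equiv.Perm (Fin n)) : ℝ)⁻¹ *
          ∑ π : Equiv.Perm (Fin n),
            ‖(d' : ℝ)⁻¹ • (∑ j : Fin d', F (π (Fin.castLE hd'n j)) z) - Favg z‖ ^ 2) ≤
      ((d' : ℝ) * ((n : ℝ) - d') / ((n : ℝ) - 1)) *
        (((2 / (n : ℝ)) * ∑ i, L i ^ 2) * ‖z - zstar‖ ^ 2 +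
          2 * ((n : ℝ)⁻¹ * ∑ i, ‖F i zstar‖ ^ 2)) := by
  have hn0 : (0 : ℝ) < n := by positivity
  have hnR : (2 : ℝ) ≤ n := by exact_mod_cast hn
  have hn1 : (0 : ℝ) < (n : ℝ) - 1 := by linarith
  have hd0 : (0 : ℝ) < d' := by exact_mod_cast hd'1
  have hdn : (d' : ℝ) ≤ n := by exact_mod_cast hd'n
  set a : Fin n → E := fun i => F i z - Favg z with ha
  set S : ℝ := ∑ i, ‖a i‖ ^ 2 with hS
  set N : ℝ := (Fintype.card (Equiv.Perm (Fin n)) : ℝ) with hN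
  have hNpos : (0 : ℝ) < N := by
    rw [hN]; exact_mod_cast Fintype.card_pos
  have hsumF : ∑ i, F i z = (n : ℝ) • Favg z := by
    rw [hF z, smul_smul, mul_inv_cancel₀ (ne_of_gt hn0), one_smul]
  have hsuma : ∑ i, a i = 0 := by
    simp only [ha, Finset.sum_sub_distrib, Finset.sum_const, Finset.card_univ,
      Fintype.card_fin, hsumF]
    rw [← Nat.cast_smul_eq_nsmul ℝ, sub_self]
  -- inner product sums
  have hfull : ∑ i, ∑ l, ⟪a i, a l⟫ = 0 := by
    have : ∑ i, ∑ l, ⟪a i, a l⟫ = ⟪∑ i, a i, ∑ l, a l⟫ := by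
      rw [sum_inner]
      exact Finset.sum_congr rfl fun i _ => (inner_sum _ _ _).symm
    rw [this, hsuma, inner_zero_left]
  have hdiagS : ∑ i, ⟪a i, a i⟫ = S := by
    exact Finset.sum_congr rfl fun i _ => real_inner_self_eq_norm_sq _
  have hdiag : ∀ j : Fin n, ∑ π : Equiv.Perm (Fin n), ⟪a (π j), a (π j)⟫ = N * S / n := by
    intro j
    have := perm_sum_single (fun i => ⟪a i, a i⟫) j
    rw [hdiagS] at this
    field_simp
    linarith [this]
  have hoff : ∀ j k : Fin n, j ≠ k →
      ∑ π : Equiv.Perm (Fin n), ⟪a (π j), a (π k)⟫ = -(N * S) / ((n : ℝ) * ((n : ℝ) - 1)) := by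
    intro j k hjk
    have := perm_sum_pair (fun i l => ⟪a i, a l⟫) hjk
    rw [hfull, hdiagS] at this
    have hprod : (0 : ℝ) < (n : ℝ) * ((n : ℝ) - 1) := by positivity
    field_simp
    linarith [this]
  -- expectation computation
  have hswap : ∑ π : Equiv.Perm (Fin n), ∑ j : Fin d', ∑ k : Fin d',
        ⟪a (π (Fin.castLE hd'n j)), a (π (Fin.castLE hd'n k))⟫ =
      ∑ j : Fin d', ∑ k : Fin d', ∑ π : Equiv.Perm (Fin n),
        ⟪a (π (Fin.castLE hd'n j)), a (π (Fin.castLE hd'n k))⟫ := by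
    rw [Finset.sum_comm]
    refine Finset.sum_congr rfl fun j _ => ?_
    exact Finset.sum_comm
  have hrow : ∀ j : Fin d', ∑ k : Fin d', ∑ π : Equiv.Perm (Fin n),
        ⟪a (π (Fin.castLE hd'n j)), a (π (Fin.castLE hd'n k))⟫ =
      N * S / n + ((d' : ℝ) - 1) * (-(N * S) / ((n : ℝ) * ((n : ℝ) - 1))) := by
    intro j
    rw [← Finset.add_sum_erase _ _ (Finset.mem_univ j)]
    congr 1
    · exact hdiag _
    · rw [Finset.sum_congr rfl (fun k hk => hoff _ _
        (fun h => (Finset.ne_of_mem_erase hk) (Fin.castLE_injective hd'n h).symm))]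
      rw [Finset.sum_const, Finset.card_erase_of_mem (Finset.mem_univ _)]
      simp [nsmul_eq_mul, Nat.cast_sub hd'1]
  have hExp : ∑ π : Equiv.Perm (Fin n), ‖∑ j : Fin d', a (π (Fin.castLE hd'n j))‖ ^ 2 =
      N * ((d' : ℝ) * ((n : ℝ) - d') / ((n : ℝ) * ((n : ℝ) - 1))) * S := by
    rw [Finset.sum_congr rfl (fun π _ => norm_sq_expand (fun j => a (π (Fin.castLE hd'n j))))]
    rw [hswap, Finset.sum_congr rfl (fun j _ => hrow j), Finset.sum_const, Finset.card_univ,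
      Fintype.card_fin, nsmul_eq_mul]
    field_simp
    ring
  -- rewrite LHS terms
  have hterm : ∀ π : Equiv.Perm (Fin n),
      ‖(d' : ℝ)⁻¹ • (∑ j : Fin d', F (π (Fin.castLE hd'n j)) z) - Favg z‖ ^ 2 =
      ((d' : ℝ)⁻¹) ^ 2 * ‖∑ j : Fin d', a (π (Fin.castLE hd'n j))‖ ^ 2 := by
    intro π
    have h1 : (d' : ℝ)⁻¹ • (∑ j : Fin d', F (π (Fin.castLE hd'n j)) z) - Favg z =
        (d' : ℝ)⁻¹ • ∑ j : Fin d', a (π (Fin.castLE hd'n j)) := by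
      simp only [ha, Finset.sum_sub_distrib, Finset.sum_const, Finset.card_univ,
        Fintype.card_fin, smul_sub]
      rw [← Nat.cast_smul_eq_nsmul ℝ, smul_smul, inv_mul_cancel₀ (ne_of_gt hd0), one_smul]
    rw [h1, norm_smul]
    simp [mul_pow, abs_of_nonneg (le_of_lt (inv_pos.mpr hd0))]
  have hLHS : (d' : ℝ) ^ 2 * (N⁻¹ *
        ∑ π : Equiv.Perm (Fin n),
          ‖(d' : ℝ)⁻¹ • (∑ j : Fin d', F (π (Fin.castLE hd'n j)) z) - Favg z‖ ^ 2) =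
      (d' : ℝ) * ((n : ℝ) - d') / ((n : ℝ) * ((n : ℝ) - 1)) * S := by
    rw [Finset.sum_congr rfl (fun π _ => hterm π), ← Finset.mul_sum, hExp]
    field_simp
  rw [hLHS]
  clear hLHS hterm hExp hrow hswap hoff hdiag hdiagS hfull hsuma hz hNpos hN
  clear_value S N
  -- now the upper bound on S
  have hvar : S ≤ ∑ i, ‖F i z‖ ^ 2 := by
    rw [hS]; simp only [ha]
    exact variance_le (ne_of_gt hn0) (fun i => F i z) (Favg z) hsumF
  have heach : ∀ i, ‖F i z‖ ^ 2 ≤ 2 * L i ^ 2 * ‖z - zstar‖ ^ 2 + 2 * ‖F i zstar‖ ^ 2 := by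
    intro i
    have h1 := hLip i z zstar
    have h2 : ‖F i z‖ ≤ ‖F i z - F i zstar‖ + ‖F i zstar‖ := by
      have := norm_add_le (F i z - F i zstar) (F i zstar)
      simpa using this
    nlinarith [norm_nonneg (F i z - F i zstar), norm_nonneg (F i zstar), norm_nonneg (F i z),
      sq_nonneg (‖F i z - F i zstar‖ - ‖F i zstar‖)]
  have hSbound : S ≤ (n : ℝ) * (((2 / (n : ℝ)) * ∑ i, L i ^ 2) * ‖z - zstar‖ ^ 2 +
      2 * ((n : ℝ)⁻¹ * ∑ i, ‖F i zstar‖ ^ 2)) := by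
    have h3 : ∑ i, ‖F i z‖ ^ 2 ≤ ∑ i, (2 * L i ^ 2 * ‖z - zstar‖ ^ 2 + 2 * ‖F i zstar‖ ^ 2) :=
      Finset.sum_le_sum fun i _ => heach i
    have h4 : ∑ i, (2 * L i ^ 2 * ‖z - zstar‖ ^ 2 + 2 * ‖F i zstar‖ ^ 2) =
        (n : ℝ) * (((2 / (n : ℝ)) * ∑ i, L i ^ 2) * ‖z - zstar‖ ^ 2 +
          2 * ((n : ℝ)⁻¹ * ∑ i, ‖F i zstar‖ ^ 2)) := by
      rw [Finset.sum_add_distrib, ← Finset.sum_mul, ← Finset.mul_sum, ← Finset.mul_sum]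
      field_simp
    linarith [hvar, h3]
  -- finish
  have hcoef : (0 : ℝ) ≤ (d' : ℝ) * ((n : ℝ) - d') / ((n : ℝ) - 1) := by
    apply div_nonneg
    · nlinarith
    · linarith
  have key : ∀ s : ℝ, (d' : ℝ) * ((n : ℝ) - d') / ((n : ℝ) * ((n : ℝ) - 1)) * s =
      ((d' : ℝ) * ((n : ℝ) - d') / ((n : ℝ) - 1)) * (s / n) := by
    intro s
    rw [div_mul_eq_mul_div, div_mul_div_comm, mul_comm ((n : ℝ) - 1) (n : ℝ)]
  rw [key S]
  apply mul_le_mul_of_nonneg_left _ hcoef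
  rw [div_le_iff₀ hn0]
  linarith [hSbound]
end

section
/- Let F : R^d → R^d be monotone and L-Lipschitz with F(z_*) = 0. Fix step sizes γ₁ > 0 and 0 < γ₂ ≤ 1/L, an integer n ≥ 1, a point z₀ ∈ R^d, and set ẑ₀ = z₀ - γ₂F(z₀). Then ‖z₀ - z_* - γ₁ n F(ẑ₀)‖² ≤ (1 + 4γ₁²n²L²)‖z₀ - z_*‖² - γ₁γ₂n(1 - γ₂²L²)‖F(z₀)‖². -/
theorem monotone_extra_step_bound {E : Type*} [NormedAddCommGroup E] [InnerProductSpace ℝ E]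
    (F : E → E) (L γ₁ γ₂ : ℝ) (n : ℕ) (hn : 1 ≤ n)
    (hL : 0 < L) (hγ₁ : 0 < γ₁) (hγ₂ : 0 < γ₂) (hγ₂' : γ₂ ≤ 1 / L)
    (hmono : ∀ z₁ z₂ : E, 0 ≤ (inner ℝ (F z₁ - F z₂) (z₁ - z₂) : ℝ))
    (hLip : ∀ z₁ z₂ : E, ‖F z₁ - F z₂‖ ≤ L * ‖z₁ - z₂‖)
    (zstar z₀ : E) (hz : F zstar = 0) :
    ‖z₀ - zstar - (γ₁ * n) • F (z₀ - γ₂ • F z₀)‖ ^ 2 ≤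
      (1 + 4 * γ₁ ^ 2 * (n : ℝ) ^ 2 * L ^ 2) * ‖z₀ - zstar‖ ^ 2 -
        γ₁ * γ₂ * n * (1 - γ₂ ^ 2 * L ^ 2) * ‖F z₀‖ ^ 2 := by
  set w := z₀ - γ₂ • F z₀ with hw
  set a := z₀ - zstar with ha
  have hγL : γ₂ * L ≤ 1 := by
    rw [le_div_iff₀ hL] at hγ₂'; linarith
  have hn1 : (1 : ℝ) ≤ (n : ℝ) := by exact_mod_cast hn
  have hs : 0 ≤ γ₁ * (n : ℝ) := by positivity
  have hF0 : ‖F z₀‖ ≤ L * ‖a‖ := by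
    have := hLip z₀ zstar
    simpa [hz, ha] using this
  have hnw : ‖z₀ - w‖ = γ₂ * ‖F z₀‖ := by
    have : z₀ - w = γ₂ • F z₀ := by rw [hw]; abel
    rw [this, norm_smul, Real.norm_eq_abs, abs_of_pos hγ₂]
  have hg : ‖F w‖ ≤ 2 * L * ‖a‖ := by
    have h1 : ‖F w‖ ≤ L * ‖w - zstar‖ := by simpa [hz] using hLip w zstar
    have h2 : ‖w - zstar‖ ≤ ‖a‖ + γ₂ * ‖F z₀‖ := by
      have hdec : w - zstar = a + (w - z₀) := by rw [ha]; abel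
      calc ‖w - zstar‖ = ‖a + (w - z₀)‖ := by rw [hdec]
        _ ≤ ‖a‖ + ‖w - z₀‖ := norm_add_le _ _
        _ = ‖a‖ + γ₂ * ‖F z₀‖ := by rw [norm_sub_rev w z₀, hnw]
    nlinarith [norm_nonneg a, norm_nonneg (F z₀), hγ₂.le]
  have hmono1 : 0 ≤ (inner ℝ (F w) (w - zstar) : ℝ) := by
    simpa [hz] using hmono w zstar
  have hFwF0 : (1 - γ₂ * L) * ‖F z₀‖ ^ 2 ≤ (inner ℝ (F w) (F z₀) : ℝ) := by
    have h1 : (inner ℝ (F w) (F z₀) : ℝ) = ‖F z₀‖ ^ 2 - inner ℝ (F z₀ - F w) (F z₀) := by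
      rw [inner_sub_left, real_inner_self_eq_norm_sq]; ring
    have h2 : (inner ℝ (F z₀ - F w) (F z₀) : ℝ) ≤ ‖F z₀ - F w‖ * ‖F z₀‖ :=
      real_inner_le_norm _ _
    have h3 : ‖F z₀ - F w‖ ≤ L * (γ₂ * ‖F z₀‖) := by
      have := hLip z₀ w
      rwa [hnw] at this
    nlinarith [norm_nonneg (F z₀)]
  have hip : γ₂ * (1 - γ₂ * L) * ‖F z₀‖ ^ 2 ≤ (inner ℝ (F w) a : ℝ) := by
    have hdecomp : (inner ℝ (F w) a : ℝ)
        = inner ℝ (F w) (w - zstar) + γ₂ * inner ℝ (F w) (F z₀) := by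
      have haw : a = (w - zstar) + γ₂ • F z₀ := by rw [ha, hw]; abel
      rw [haw, inner_add_right, inner_smul_right]
    nlinarith [hγ₂.le]
  have hexp : ‖a - (γ₁ * (n : ℝ)) • F w‖ ^ 2
      = ‖a‖ ^ 2 - 2 * (γ₁ * (n : ℝ)) * (inner ℝ (F w) a : ℝ)
        + (γ₁ * (n : ℝ)) ^ 2 * ‖F w‖ ^ 2 := by
    rw [norm_sub_sq_real, inner_smul_right, norm_smul, Real.norm_eq_abs,
      abs_of_nonneg hs, mul_pow, real_inner_comm]
    ring
  rw [hexp]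
  have key1 : (γ₁ * (n : ℝ)) ^ 2 * ‖F w‖ ^ 2
      ≤ (γ₁ * (n : ℝ)) ^ 2 * (2 * L * ‖a‖) ^ 2 := by
    have := mul_self_le_mul_self (norm_nonneg (F w)) hg
    nlinarith [sq_nonneg (γ₁ * (n : ℝ))]
  have key2 : (γ₁ * (n : ℝ)) * (γ₂ * (1 - γ₂ * L) * ‖F z₀‖ ^ 2)
      ≤ (γ₁ * (n : ℝ)) * (inner ℝ (F w) a : ℝ) :=
    mul_le_mul_of_nonneg_left hip hs
  have key3 : γ₁ * γ₂ * (n : ℝ) * (1 - γ₂ ^ 2 * L ^ 2) * ‖F z₀‖ ^ 2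
      ≤ 2 * ((γ₁ * (n : ℝ)) * (γ₂ * (1 - γ₂ * L) * ‖F z₀‖ ^ 2)) := by
    have h1 : (0:ℝ) ≤ γ₁ * γ₂ * (n : ℝ) * ‖F z₀‖ ^ 2 := by positivity
    nlinarith [mul_nonneg h1 (sq_nonneg (1 - γ₂ * L))]
  have e : (γ₁ * (n : ℝ)) ^ 2 * (2 * L * ‖a‖) ^ 2 = 4 * γ₁ ^ 2 * (n : ℝ) ^ 2 * L ^ 2 * ‖a‖ ^ 2 := by ring
  ring_nf at key1 key2 key3 e ⊢
  linarith only [key1, key2, key3, e]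
end

section
/- Let F₁, ..., F_n : R^d → R^d each be L_max-Lipschitz, F = (1/n)Σ F_i, and fix γ₂ with 0 < γ₂ ≤ 1/L_max. For points z₀, z_0', ..., z_{n-1}' ∈ R^d define z̄_i = z_i' - γ₂F_{σ(i)}(z_i') and ẑ₀ = z₀ - γ₂F(z₀) for any function σ : {0,...,n-1} → {1,...,n}. Then Σ_{i=0}^{n-1} ‖F_{σ(i)}(z̄_i) - F_{σ(i)}(ẑ₀)‖² ≤ 6L_max² Σ_{i=0}^{n-1} ‖z_i' - z₀‖² + 3L_max²γ₂² Σ_{i=0}^{n-1} ‖F_{σ(i)}(z₀) - F(z₀)‖². -/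
theorem extrapolation_deviation_bound {E : Type*} [NormedAddCommGroup E]
    [InnerProductSpace ℝ E]
    (n : ℕ) (Lmax γ₂ : ℝ) (hL : 0 < Lmax) (hγ : 0 < γ₂) (hγ' : γ₂ ≤ 1 / Lmax)
    (F : Fin n → E → E)
    (hLip : ∀ i, ∀ z₁ z₂, ‖F i z₁ - F i z₂‖ ≤ Lmax * ‖z₁ - z₂‖)
    (Favg : E → E) (hF : ∀ z, Favg z = (n : ℝ)⁻¹ • ∑ i, F i z)
    (σ : Fin n → Fin n) (z₀ : E) (z' : Fin n → E) :
    ∑ i, ‖F (σ i) (z' i - γ₂ • F (σ i) (z' i)) - F (σ i) (z₀ - γ₂ • Favg z₀)‖ ^ 2 ≤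
      6 * Lmax ^ 2 * ∑ i, ‖z' i - z₀‖ ^ 2 +
        3 * Lmax ^ 2 * γ₂ ^ 2 * ∑ i, ‖F (σ i) z₀ - Favg z₀‖ ^ 2 := by
  have hγL : γ₂ * Lmax ≤ 1 := by
    rw [le_div_iff₀ hL] at hγ'; exact hγ'
  have key : ∀ i : Fin n,
      ‖F (σ i) (z' i - γ₂ • F (σ i) (z' i)) - F (σ i) (z₀ - γ₂ • Favg z₀)‖ ^ 2 ≤
        6 * Lmax ^ 2 * ‖z' i - z₀‖ ^ 2 +
          3 * Lmax ^ 2 * γ₂ ^ 2 * ‖F (σ i) z₀ - Favg z₀‖ ^ 2 := by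
    intro i
    set a := ‖z' i - z₀‖ with ha
    set b := ‖F (σ i) z₀ - Favg z₀‖ with hb
    have ha0 : 0 ≤ a := norm_nonneg _
    have hb0 : 0 ≤ b := norm_nonneg _
    have h1 : ‖F (σ i) (z' i - γ₂ • F (σ i) (z' i)) - F (σ i) (z₀ - γ₂ • Favg z₀)‖ ≤
        Lmax * ‖(z' i - γ₂ • F (σ i) (z' i)) - (z₀ - γ₂ • Favg z₀)‖ := hLip _ _ _
    have h2 : (z' i - γ₂ • F (σ i) (z' i)) - (z₀ - γ₂ • Favg z₀) =
        (z' i - z₀) - γ₂ • (F (σ i) (z' i) - F (σ i) z₀) - γ₂ • (F (σ i) z₀ - Favg z₀) := by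
      simp only [smul_sub]; abel
    have h3 : ‖(z' i - γ₂ • F (σ i) (z' i)) - (z₀ - γ₂ • Favg z₀)‖ ≤
        a + γ₂ * (Lmax * a) + γ₂ * b := by
      rw [h2]
      calc ‖(z' i - z₀) - γ₂ • (F (σ i) (z' i) - F (σ i) z₀) - γ₂ • (F (σ i) z₀ - Favg z₀)‖
          ≤ ‖(z' i - z₀) - γ₂ • (F (σ i) (z' i) - F (σ i) z₀)‖ + ‖γ₂ • (F (σ i) z₀ - Favg z₀)‖ :=
            norm_sub_le _ _
        _ ≤ ‖z' i - z₀‖ + ‖γ₂ • (F (σ i) (z' i) - F (σ i) z₀)‖ + ‖γ₂ • (F (σ i) z₀ - Favg z₀)‖ := by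
            gcongr; exact norm_sub_le _ _
        _ = a + γ₂ * ‖F (σ i) (z' i) - F (σ i) z₀‖ + γ₂ * b := by
            rw [norm_smul, norm_smul, Real.norm_eq_abs, abs_of_pos hγ]
        _ ≤ a + γ₂ * (Lmax * a) + γ₂ * b := by
            gcongr
            exact hLip _ _ _
    have h4 : ‖F (σ i) (z' i - γ₂ • F (σ i) (z' i)) - F (σ i) (z₀ - γ₂ • Favg z₀)‖ ≤
        Lmax * (a + γ₂ * (Lmax * a) + γ₂ * b) :=
      h1.trans (by gcongr)
    have h5 : ‖F (σ i) (z' i - γ₂ • F (σ i) (z' i)) - F (σ i) (z₀ - γ₂ • Favg z₀)‖ ^ 2 ≤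
        (Lmax * (a + γ₂ * (Lmax * a) + γ₂ * b)) ^ 2 := by
      exact pow_le_pow_left₀ (norm_nonneg _) h4 2
    have hγL2 : γ₂ ^ 2 * Lmax ^ 2 ≤ 1 := by
      have := mul_le_mul hγL hγL (mul_pos hγ hL).le zero_le_one
      nlinarith [this]
    have h6 : (a + γ₂ * (Lmax * a) + γ₂ * b) ^ 2 ≤ 6 * a ^ 2 + 3 * γ₂ ^ 2 * b ^ 2 := by
      nlinarith [sq_nonneg (a - γ₂ * Lmax * a), sq_nonneg (a - γ₂ * b),
        sq_nonneg (γ₂ * Lmax * a - γ₂ * b),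
        mul_le_mul_of_nonneg_right hγL2 (sq_nonneg a)]
    nlinarith [mul_le_mul_of_nonneg_left h6 (sq_nonneg Lmax)]
  calc ∑ i, ‖F (σ i) (z' i - γ₂ • F (σ i) (z' i)) - F (σ i) (z₀ - γ₂ • Favg z₀)‖ ^ 2
      ≤ ∑ i, (6 * Lmax ^ 2 * ‖z' i - z₀‖ ^ 2 +
          3 * Lmax ^ 2 * γ₂ ^ 2 * ‖F (σ i) z₀ - Favg z₀‖ ^ 2) :=
        Finset.sum_le_sum fun i _ => key i
    _ = 6 * Lmax ^ 2 * ∑ i, ‖z' i - z₀‖ ^ 2 +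
        3 * Lmax ^ 2 * γ₂ ^ 2 * ∑ i, ‖F (σ i) z₀ - Favg z₀‖ ^ 2 := by
        rw [Finset.sum_add_distrib, Finset.mul_sum, Finset.mul_sum]
end
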